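/- Let f : N → M be a surjective non-contractive multi-embedding of a metric space M in a metric space N with path distortion at most α, where α ≥ 1. Then for every finite task sequence σ = (τ_1,…,τ_m) on M, the lifted task sequence σ^N = (τ_1∘f,…,τ_m∘f) on N satisfies Opt_N(σ^N) ≤ α·Opt_M(σ). -/

import Mathlib

open ENNReal

/-- A multi-embedding `f : N → M` (a surjective map) is non-contractive if
distances in `N` dominate the distances of the images in `M`. -/
def NonContractive {N M : Type*} [MetricSpace N] [MetricSpace M] (f : N → M) : Prop :=
  ∀ u v : N, dist (f u) (f v) ≤ dist u v

/-- The length of a path (finite sequence of points) in a metric space. -/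
noncomputable def pathLength {X : Type*} [MetricSpace X] (p : List X) : ℝ :=
  (List.zipWith dist p p.tail).sum

/-- A non-contractive multi-embedding `f : N → M` has path distortion at most `α`. -/
def PathDistortionLE {N M : Type*} [MetricSpace N] [MetricSpace M] (f : N → M) (α : ℝ) : Prop :=
  ∀ p : List M, ∃ p' : List N, p'.map f = p ∧ pathLength p' ≤ α * pathLength p

/-- The optimal offline cost of serving the task sequence `σ` in the metrical task
system on `S`: the infimum over all state sequences `s_0, s_1, …, s_m` of the sum of the
movement costs `d(s_{i-1}, s_i)` and the service costs `τ_i(s_i)` (the initial state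
`s_0` is unconstrained). -/
noncomputable def mtsOpt {S : Type*} [MetricSpace S] (σ : List (S → ℝ≥0∞)) : ℝ≥0∞ :=
  ⨅ s : Fin (σ.length + 1) → S,
    ∑ i : Fin σ.length, (edist (s i.castSucc) (s i.succ) + σ.get i (s i.succ))

lemma pathLength_ofFn {X : Type*} [MetricSpace X] :
    ∀ (n : ℕ) (g : Fin (n + 1) → X),
      pathLength (List.ofFn g) = ∑ i : Fin n, dist (g i.castSucc) (g i.succ) := by
  intro n
  induction n with
  | zero => intro g; simp [pathLength]
  | succ n ih =>
    intro g
    have h1 : List.ofFn g = g 0 :: List.ofFn (g ∘ Fin.succ) := by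
      simp [List.ofFn_succ]
    have h2 : List.ofFn (g ∘ Fin.succ) = g 1 :: List.ofFn (fun i : Fin n => g i.succ.succ) := by
      simp [List.ofFn_succ]
    have key : pathLength (List.ofFn g)
        = dist (g 0) (g 1) + pathLength (List.ofFn (g ∘ Fin.succ)) := by
      rw [h1, h2]
      simp [pathLength]
    rw [key, ih (g ∘ Fin.succ), Fin.sum_univ_succ]
    congr 1


/-- If `f : N → M` is a surjective non-contractive multi-embedding with path distortion
at most `α ≥ 1`, then for every finite task sequence `σ` on `M` the lifted task sequence
`σ^N = (τ_1 ∘ f, …, τ_m ∘ f)` on `N` satisfies `Opt_N(σ^N) ≤ α · Opt_M(σ)`. -/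
theorem mtsOpt_lift_le
    {M N : Type*} [MetricSpace M] [MetricSpace N]
    (f : N → M) (α : ℝ) (hα : 1 ≤ α)
    (hsurj : Function.Surjective f)
    (hnc : NonContractive f)
    (hpd : PathDistortionLE f α)
    (σ : List (M → ℝ≥0∞)) :
    mtsOpt (σ.map (fun τ => τ ∘ f)) ≤ ENNReal.ofReal α * mtsOpt σ := by
  have hα0 : (0:ℝ) ≤ α := le_trans zero_le_one hα
  have hαne0 : ENNReal.ofReal α ≠ 0 := by
    simp only [ne_eq, ENNReal.ofReal_eq_zero, not_le]; linarith
  conv_rhs => rw [mtsOpt, ENNReal.mul_iInf_of_ne hαne0 ENNReal.ofReal_ne_top]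
  apply le_iInf
  intro s
  obtain ⟨p', hmap, hlen⟩ := hpd (List.ofFn s)
  have hplen : p'.length = σ.length + 1 := by
    have := congrArg List.length hmap
    simpa using this
  set s' : Fin (σ.length + 1) → N := fun i => p'.get (Fin.cast hplen.symm i) with hs'
  have hfs : ∀ j : Fin (σ.length + 1), f (s' j) = s j := by
    intro j
    have hj : (j : ℕ) < p'.length := by rw [hplen]; exact j.isLt
    have h1 : f (s' j) = (p'.map f)[(j : ℕ)]'(by simpa using hj) := by
      simp [hs', List.getElem_map]
    rw [h1]
    have h2 : (p'.map f)[(j : ℕ)]'(by simpa using hj)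
        = (List.ofFn s)[(j : ℕ)]'(by simpa using j.isLt) := by
      congr 1
    rw [h2, List.getElem_ofFn]
  have hofn : List.ofFn s' = p' := by
    apply List.ext_get (by simp [hplen])
    intro i h1 h2
    rw [List.get_ofFn]
    simp [hs']
  have hlift_len : (σ.map (fun τ => τ ∘ f)).length = σ.length := by simp
  have hle : mtsOpt (σ.map (fun τ => τ ∘ f)) ≤
      ∑ i : Fin σ.length, (edist (s' i.castSucc) (s' i.succ) + σ.get i (s (i.succ))) := by
    rw [mtsOpt]
    refine (iInf_le (fun t : Fin ((σ.map (fun τ => τ ∘ f)).length + 1) → N =>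
      ∑ i : Fin (σ.map (fun τ => τ ∘ f)).length,
        (edist (t i.castSucc) (t i.succ) + (σ.map (fun τ => τ ∘ f)).get i (t i.succ)))
      (fun i => s' (Fin.cast (by simp) i))).trans_eq ?_
    apply Fintype.sum_equiv (finCongr hlift_len)
    intro i
    have hi : (i : ℕ) < σ.length := by simpa using i.isLt
    congr 1
    rw [List.get_eq_getElem, List.getElem_map]
    show σ.get _ (f (s' _)) = _
    rw [hfs]
    rfl
  refine hle.trans ?_
  have hmove : ∑ i : Fin σ.length, edist (s' i.castSucc) (s' i.succ)
      = ENNReal.ofReal (pathLength p') := by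
    rw [← hofn, pathLength_ofFn]
    rw [ENNReal.ofReal_sum_of_nonneg (fun i _ => dist_nonneg)]
    exact Finset.sum_congr rfl fun i _ => edist_dist _ _
  have hmoveM : ENNReal.ofReal (pathLength (List.ofFn s))
      = ∑ i : Fin σ.length, edist (s i.castSucc) (s i.succ) := by
    rw [pathLength_ofFn, ENNReal.ofReal_sum_of_nonneg (fun i _ => dist_nonneg)]
    exact Finset.sum_congr rfl fun i _ => (edist_dist _ _).symm
  calc ∑ i : Fin σ.length, (edist (s' i.castSucc) (s' i.succ) + σ.get i (s i.succ))
      = (∑ i : Fin σ.length, edist (s' i.castSucc) (s' i.succ))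
        + ∑ i : Fin σ.length, σ.get i (s i.succ) := by rw [Finset.sum_add_distrib]
    _ ≤ ENNReal.ofReal α * (∑ i : Fin σ.length, edist (s i.castSucc) (s i.succ))
        + ENNReal.ofReal α * ∑ i : Fin σ.length, σ.get i (s i.succ) := by
        gcongr
        · rw [hmove, ← hmoveM, ← ENNReal.ofReal_mul hα0]
          exact ENNReal.ofReal_le_ofReal hlen
        · nth_rewrite 1 [← one_mul (∑ i : Fin σ.length, σ.get i (s i.succ))]
          gcongr
          exact ENNReal.one_le_ofReal.2 hα
    _ = ENNReal.ofReal α *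
        ∑ i : Fin σ.length, (edist (s i.castSucc) (s i.succ) + σ.get i (s i.succ)) := by
        rw [← mul_add, Finset.sum_add_distrib]
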